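/- Let r ≥ 2 and let ξ ∈ ℂ be a primitive r-th root of unity. For all integers a and k with 0 ≤ k < r and every integral quadratic form Q, the element Σ_{n=0}^{r-1} ξ^{Q(n)}·binomξ(n+a, k) of ℤ[ξ] is divisible by x_{r-1-k} in ℤ[ξ]. -/

import Mathlib

noncomputable section

/-- The Gaussian binomial coefficient `binomq(m,j) = (q^{m-j+1};q)_j/(q;q)_j` evaluated at
`q = ξ` (well-defined as written whenever the denominator is nonzero, e.g. for `j < r`). -/
def binomXi (ξ : ℂ) (m : ℤ) (j : ℕ) : ℂ :=
  (∏ i ∈ Finset.range j, (1 - ξ ^ (m - (j : ℤ) + 1 + (i : ℤ)))) /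
    (∏ i ∈ Finset.range j, (1 - ξ ^ (i + 1)))

/-- An integral quadratic form `Q(n) = a₂ n² + a₁ n + a₀`. -/
def IsIntegralQuadraticForm (Q : ℤ → ℤ) : Prop :=
  ∃ a₂ a₁ a₀ : ℤ, ∀ n : ℤ, Q n = a₂ * n ^ 2 + a₁ * n + a₀

/-- `x_k = ∏_{j=⌊k/2⌋+1}^{k} (1 - ξ^j)`. -/
def xXi (ξ : ℂ) (k : ℕ) : ℂ := ∏ j ∈ Finset.Icc (k / 2 + 1) k, (1 - ξ ^ j)

namespace Stmt8

/-- Gaussian binomial at `ξ`, defined by the Pascal recursion. -/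
def gb (ξ : ℂ) : ℕ → ℕ → ℂ
  | 0, 0 => 1
  | 0, _+1 => 0
  | _+1, 0 => 1
  | M+1, t+1 => gb ξ M (t+1) * ξ^(t+1) + gb ξ M t

variable {ξ : ℂ}

@[simp] lemma gb_zero_right (M : ℕ) : gb ξ M 0 = 1 := by cases M <;> rfl

lemma gb_eq_zero : ∀ {M t : ℕ}, M < t → gb ξ M t = 0
  | 0, _+1, _ => rfl
  | M+1, t+1, h => by
      show gb ξ M (t+1) * ξ^(t+1) + gb ξ M t = 0
      rw [gb_eq_zero (by omega), gb_eq_zero (by omega)]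
      ring

lemma gb_diag : ∀ M : ℕ, gb ξ M M = 1
  | 0 => rfl
  | M+1 => by
      show gb ξ M (M+1) * ξ^(M+1) + gb ξ M M = 1
      rw [gb_eq_zero (by omega), gb_diag M]
      ring

lemma gb_pascal1 (M t : ℕ) : gb ξ (M+1) (t+1) = gb ξ M (t+1) * ξ^(t+1) + gb ξ M t := rfl

lemma gb_pascal2 : ∀ M t : ℕ, t ≤ M → gb ξ (M+1) (t+1) = gb ξ M (t+1) + ξ^(M-t) * gb ξ M t
  | 0, 0, _ => by
      show gb ξ 0 1 * ξ^1 + gb ξ 0 0 = gb ξ 0 1 + ξ^0 * gb ξ 0 0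
      show (0:ℂ) * ξ^1 + 1 = 0 + ξ^0 * 1
      ring
  | M+1, 0, _ => by
      have h1 : gb ξ (M+1) 1 = gb ξ M 1 + ξ^(M-0) * gb ξ M 0 := gb_pascal2 M 0 (by omega)
      show gb ξ (M+1) 1 * ξ^1 + gb ξ (M+1) 0 = gb ξ (M+1) 1 + ξ^(M+1) * gb ξ (M+1) 0
      calc gb ξ (M+1) 1 * ξ^1 + gb ξ (M+1) 0
          = (gb ξ M 1 + ξ^(M-0) * gb ξ M 0) * ξ^1 + 1 := by
            rw [← h1]; simp [gb_zero_right]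
        _ = (gb ξ M 1 * ξ^1 + gb ξ M 0) + ξ^(M+1) * 1 := by
            simp only [gb_zero_right, Nat.sub_zero]
            rw [pow_succ]
            ring
        _ = gb ξ (M+1) 1 + ξ^(M+1) * gb ξ (M+1) 0 := by
            rw [gb_pascal1]
            simp [gb_zero_right]
  | M+1, t+1, h => by
      rcases Nat.lt_or_ge (t+1) (M+1) with hlt | hge
      · have htM : t + 1 ≤ M := by omega
        have e1 : gb ξ (M+1) (t+2) = gb ξ M (t+2) + ξ^(M-(t+1)) * gb ξ M (t+1) :=
          gb_pascal2 M (t+1) htM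
        have e2 : gb ξ (M+1) (t+1) = gb ξ M (t+1) + ξ^(M-t) * gb ξ M t :=
          gb_pascal2 M t (by omega)
        have e3 : gb ξ (M+1) (t+2) = gb ξ M (t+2) * ξ^(t+2) + gb ξ M (t+1) := rfl
        have e4 : gb ξ (M+1) (t+1) = gb ξ M (t+1) * ξ^(t+1) + gb ξ M t := rfl
        have p1 : ξ^(M-(t+1)) * ξ^(t+2) = ξ^(M+1) := by
          rw [← pow_add]; congr 1; omega
        have p2 : ξ^(M+1-(t+1)) * ξ^(t+1) = ξ^(M+1) := by
          rw [← pow_add]; congr 1; omega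
        show gb ξ (M+1) (t+2) * ξ^(t+2) + gb ξ (M+1) (t+1)
          = gb ξ (M+1) (t+2) + ξ^(M+1-(t+1)) * gb ξ (M+1) (t+1)
        calc gb ξ (M+1) (t+2) * ξ^(t+2) + gb ξ (M+1) (t+1)
            = (gb ξ M (t+2) + ξ^(M-(t+1)) * gb ξ M (t+1)) * ξ^(t+2)
              + (gb ξ M (t+1) + ξ^(M-t) * gb ξ M t) := by rw [← e1, ← e2]
          _ = (gb ξ M (t+2) * ξ^(t+2) + gb ξ M (t+1))
              + ξ^(M+1-(t+1)) * (gb ξ M (t+1) * ξ^(t+1) + gb ξ M t) := by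
              have hMt : M + 1 - (t+1) = M - t := by omega
              rw [hMt]
              linear_combination gb ξ M (t+1) * p1 - gb ξ M (t+1) * (by rw [← pow_add]; congr 1; omega : ξ^(M-t) * ξ^(t+1) = ξ^(M+1))
          _ = gb ξ (M+1) (t+2) + ξ^(M+1-(t+1)) * gb ξ (M+1) (t+1) := by rw [← e3, ← e4]
      · have ht : t = M := by omega
        have z1 : gb ξ (M+1) (t+2) = 0 := gb_eq_zero (by omega)
        show gb ξ (M+1) (t+2) * ξ^(t+2) + gb ξ (M+1) (t+1)
          = gb ξ (M+1) (t+2) + ξ^(M+1-(t+1)) * gb ξ (M+1) (t+1)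
        rw [z1, show M+1-(t+1) = 0 by omega]
        ring


lemma gb_symm : ∀ M t : ℕ, t ≤ M → gb ξ M t = gb ξ M (M-t)
  | 0, 0, _ => rfl
  | M+1, 0, _ => by
      rw [gb_zero_right, Nat.sub_zero, gb_diag]
  | M+1, t+1, h => by
      rcases Nat.lt_or_ge (t+1) (M+1) with hlt | hge
      · have htM : t + 1 ≤ M := by omega
        have e1 : gb ξ (M+1) (t+1) = gb ξ M (t+1) + ξ^(M-t) * gb ξ M t :=
          gb_pascal2 M t (by omega)
        have hMt : M + 1 - (t+1) = (M - (t+1)) + 1 := by omega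
        rw [e1, hMt, gb_pascal1, show M - (t+1) + 1 = M - t by omega,
          ← gb_symm M t (by omega), ← gb_symm M (t+1) htM]
        ring
      · have ht : t = M := by omega
        rw [show M + 1 - (t+1) = 0 by omega, gb_zero_right, ht, gb_diag]


/-- Twisted alternating q-binomial sum `F_M(γ) = Σ_t (-1)^t ξ^{γt+λC(t,2)} [M,t]_ξ`. -/
def Fq (ξ : ℂ) (lam : ℤ) (M : ℕ) (γ : ℤ) : ℂ :=
  ∑ t ∈ Finset.range (M+1),
    (-1:ℂ)^t * ξ^(γ*(t:ℤ) + lam*((t.choose 2 : ℕ):ℤ)) * gb ξ M t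

lemma choose2_succ (t : ℕ) : (((t+1).choose 2 : ℕ):ℤ) = ((t.choose 2 : ℕ):ℤ) + t := by
  have h : (t+1).choose 2 = t.choose 1 + t.choose 2 := Nat.choose_succ_succ t 1
  rw [h, Nat.choose_one_right]
  push_cast
  ring

lemma zpow_cast_succ (ξ : ℂ) (M : ℕ) : ξ^((M:ℤ)+1) = ξ^(M+1) := by
  have h : ((M:ℤ)+1) = ((M+1:ℕ):ℤ) := by push_cast; ring
  rw [h, zpow_natCast]

lemma zsplit (hne : ξ ≠ 0) {a b c : ℤ} (h : a = b + c) : ξ^a = ξ^b * ξ^c := by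
  rw [h, zpow_add₀ hne]

lemma Fq_zero_M (lam : ℤ) (γ : ℤ) : Fq ξ lam 0 γ = 1 := by
  unfold Fq
  rw [Finset.sum_range_one]
  norm_num [gb]

lemma Fq_congr {r : ℕ} (hξ : IsPrimitiveRoot ξ r) (hne : ξ ≠ 0) (lam : ℤ) (M : ℕ) {γ γ' : ℤ}
    (h : (r:ℤ) ∣ (γ - γ')) : Fq ξ lam M γ = Fq ξ lam M γ' := by
  unfold Fq
  refine Finset.sum_congr rfl (fun t _ => ?_)
  have h1 : ξ^((γ-γ')*(t:ℤ)) = 1 :=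
    (hξ.zpow_eq_one_iff_dvd _).2 (Dvd.dvd.mul_right h _)
  have h2 : ξ^(γ*(t:ℤ) + lam*((t.choose 2 : ℕ):ℤ))
      = ξ^((γ-γ')*(t:ℤ)) * ξ^(γ'*(t:ℤ) + lam*((t.choose 2 : ℕ):ℤ)) :=
    zsplit hne (by ring)
  rw [h2, h1, one_mul]

lemma Fq_R (hne : ξ ≠ 0) (lam : ℤ) (M : ℕ) (γ : ℤ) :
    Fq ξ lam (M+1) γ = Fq ξ lam M (γ+1) - ξ^γ * Fq ξ lam M (γ+lam) := by
  have hsplit : ∀ t ∈ Finset.range (M+1),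
      (-1:ℂ)^(t+1) * ξ^(γ*((t+1:ℕ):ℤ) + lam*(((t+1).choose 2 : ℕ):ℤ)) * gb ξ (M+1) (t+1)
      = ((-1:ℂ)^(t+1) * ξ^((γ+1)*((t+1:ℕ):ℤ) + lam*(((t+1).choose 2 : ℕ):ℤ)) * gb ξ M (t+1))
        - ξ^γ * ((-1:ℂ)^t * ξ^((γ+lam)*(t:ℤ) + lam*((t.choose 2 : ℕ):ℤ)) * gb ξ M t) := by
    intro t _
    rw [gb_pascal1]
    have k1 : ξ^(γ*((t+1:ℕ):ℤ) + lam*(((t+1).choose 2 : ℕ):ℤ)) * (ξ:ℂ)^(t+1)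
        = ξ^((γ+1)*((t+1:ℕ):ℤ) + lam*(((t+1).choose 2 : ℕ):ℤ)) := by
      rw [← zpow_natCast ξ (t+1), ← zpow_add₀ hne]
      congr 1
      push_cast
      ring
    have k2 : ξ^(γ*((t+1:ℕ):ℤ) + lam*(((t+1).choose 2 : ℕ):ℤ))
        = ξ^γ * ξ^((γ+lam)*(t:ℤ) + lam*((t.choose 2 : ℕ):ℤ)) := by
      rw [← zpow_add₀ hne]
      congr 1
      rw [choose2_succ]
      push_cast
      ring
    calc (-1:ℂ)^(t+1) * ξ^(γ*((t+1:ℕ):ℤ) + lam*(((t+1).choose 2 : ℕ):ℤ))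
          * (gb ξ M (t+1) * ξ^(t+1) + gb ξ M t)
        = ((-1:ℂ)^(t+1) * (ξ^(γ*((t+1:ℕ):ℤ) + lam*(((t+1).choose 2 : ℕ):ℤ)) * ξ^(t+1)) * gb ξ M (t+1))
          + ((-1:ℂ)^(t+1) * ξ^(γ*((t+1:ℕ):ℤ) + lam*(((t+1).choose 2 : ℕ):ℤ)) * gb ξ M t) := by
          ring
      _ = _ := by
          rw [k1, k2, pow_succ]
          ring
  unfold Fq
  rw [Finset.sum_range_succ'
    (fun t => (-1:ℂ)^t * ξ^(γ*(t:ℤ) + lam*((t.choose 2 : ℕ):ℤ)) * gb ξ (M+1) t) (M+1)]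
  rw [Finset.sum_congr rfl hsplit]
  rw [Finset.sum_sub_distrib]
  have hA : (∑ t ∈ Finset.range (M+1),
      (-1:ℂ)^(t+1) * ξ^((γ+1)*((t+1:ℕ):ℤ) + lam*(((t+1).choose 2 : ℕ):ℤ)) * gb ξ M (t+1))
      + ((-1:ℂ)^0 * ξ^(γ*((0:ℕ):ℤ) + lam*(((0:ℕ).choose 2 : ℕ):ℤ)) * gb ξ (M+1) 0)
      = ∑ t ∈ Finset.range (M+1),
        (-1:ℂ)^t * ξ^((γ+1)*(t:ℤ) + lam*((t.choose 2 : ℕ):ℤ)) * gb ξ M t := by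
    have h0 : ((-1:ℂ)^0 * ξ^(γ*((0:ℕ):ℤ) + lam*(((0:ℕ).choose 2 : ℕ):ℤ)) * gb ξ (M+1) 0)
        = (-1:ℂ)^0 * ξ^((γ+1)*((0:ℕ):ℤ) + lam*(((0:ℕ).choose 2 : ℕ):ℤ)) * gb ξ M 0 := by
      norm_num
    rw [h0, ← Finset.sum_range_succ'
      (fun t => (-1:ℂ)^t * ξ^((γ+1)*(t:ℤ) + lam*((t.choose 2 : ℕ):ℤ)) * gb ξ M t) (M+1)]
    rw [Finset.sum_range_succ]
    rw [gb_eq_zero (show M < M+1 by omega)]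
    ring
  rw [sub_add_eq_add_sub, hA, ← Finset.mul_sum]

lemma Fq_R2 (hne : ξ ≠ 0) (lam : ℤ) (M : ℕ) (γ : ℤ) :
    Fq ξ lam (M+1) γ = Fq ξ lam M γ - ξ^(γ+M) * Fq ξ lam M (γ+lam-1) := by
  have hsplit : ∀ t ∈ Finset.range (M+1),
      (-1:ℂ)^(t+1) * ξ^(γ*((t+1:ℕ):ℤ) + lam*(((t+1).choose 2 : ℕ):ℤ)) * gb ξ (M+1) (t+1)
      = ((-1:ℂ)^(t+1) * ξ^(γ*((t+1:ℕ):ℤ) + lam*(((t+1).choose 2 : ℕ):ℤ)) * gb ξ M (t+1))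
        - ξ^(γ+M) * ((-1:ℂ)^t * ξ^((γ+lam-1)*(t:ℤ) + lam*((t.choose 2 : ℕ):ℤ)) * gb ξ M t) := by
    intro t ht
    have htM : t ≤ M := by
      have := Finset.mem_range.1 ht; omega
    rw [gb_pascal2 M t htM]
    have k2 : ξ^(γ*((t+1:ℕ):ℤ) + lam*(((t+1).choose 2 : ℕ):ℤ)) * (ξ:ℂ)^(M-t)
        = ξ^(γ+M) * ξ^((γ+lam-1)*(t:ℤ) + lam*((t.choose 2 : ℕ):ℤ)) := by
      rw [← zpow_natCast ξ (M-t), ← zpow_add₀ hne, ← zpow_add₀ hne]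
      congr 1
      rw [choose2_succ]
      have : ((M-t : ℕ):ℤ) = (M:ℤ) - (t:ℤ) := by
        push_cast [Nat.cast_sub htM]
        ring
      rw [this]
      push_cast
      ring
    calc (-1:ℂ)^(t+1) * ξ^(γ*((t+1:ℕ):ℤ) + lam*(((t+1).choose 2 : ℕ):ℤ))
          * (gb ξ M (t+1) + ξ^(M-t) * gb ξ M t)
        = ((-1:ℂ)^(t+1) * ξ^(γ*((t+1:ℕ):ℤ) + lam*(((t+1).choose 2 : ℕ):ℤ)) * gb ξ M (t+1))
          + ((-1:ℂ)^(t+1) * (ξ^(γ*((t+1:ℕ):ℤ) + lam*(((t+1).choose 2 : ℕ):ℤ)) * ξ^(M-t)) * gb ξ M t) := by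
          ring
      _ = _ := by
          rw [k2, pow_succ]
          ring
  unfold Fq
  rw [Finset.sum_range_succ'
    (fun t => (-1:ℂ)^t * ξ^(γ*(t:ℤ) + lam*((t.choose 2 : ℕ):ℤ)) * gb ξ (M+1) t) (M+1)]
  rw [Finset.sum_congr rfl hsplit]
  rw [Finset.sum_sub_distrib]
  have hA : (∑ t ∈ Finset.range (M+1),
      (-1:ℂ)^(t+1) * ξ^(γ*((t+1:ℕ):ℤ) + lam*(((t+1).choose 2 : ℕ):ℤ)) * gb ξ M (t+1))
      + ((-1:ℂ)^0 * ξ^(γ*((0:ℕ):ℤ) + lam*(((0:ℕ).choose 2 : ℕ):ℤ)) * gb ξ (M+1) 0)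
      = ∑ t ∈ Finset.range (M+1),
        (-1:ℂ)^t * ξ^(γ*(t:ℤ) + lam*((t.choose 2 : ℕ):ℤ)) * gb ξ M t := by
    have h0 : ((-1:ℂ)^0 * ξ^(γ*((0:ℕ):ℤ) + lam*(((0:ℕ).choose 2 : ℕ):ℤ)) * gb ξ (M+1) 0)
        = (-1:ℂ)^0 * ξ^(γ*((0:ℕ):ℤ) + lam*(((0:ℕ).choose 2 : ℕ):ℤ)) * gb ξ M 0 := by
      norm_num
    rw [h0, ← Finset.sum_range_succ'
      (fun t => (-1:ℂ)^t * ξ^(γ*(t:ℤ) + lam*((t.choose 2 : ℕ):ℤ)) * gb ξ M t) (M+1)]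
    rw [Finset.sum_range_succ]
    rw [gb_eq_zero (show M < M+1 by omega)]
    ring
  rw [sub_add_eq_add_sub, hA, ← Finset.mul_sum]

lemma Fq_D1 (hne : ξ ≠ 0) (lam : ℤ) (M : ℕ) (γ : ℤ) :
    Fq ξ lam (M+1) γ - Fq ξ lam (M+1) (γ+1)
      = -(ξ^γ) * (1 - ξ^((M:ℤ)+1)) * Fq ξ lam M (γ+lam) := by
  have h1 := Fq_R hne lam M γ
  have h2 := Fq_R2 hne lam M (γ+1)
  have h3 : γ+1+lam-1 = γ+lam := by ring
  rw [h3] at h2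
  have h4 : ξ^(γ+1+(M:ℤ)) = ξ^γ * ξ^((M:ℤ)+1) := by
    rw [← zpow_add₀ hne]
    congr 1
    ring
  rw [h1, h2, h4]
  ring


lemma two_choose2 : ∀ n : ℕ, 2*((n.choose 2 : ℕ):ℤ) = (n:ℤ)*((n:ℤ)-1)
  | 0 => by norm_num
  | n+1 => by
      rw [choose2_succ]
      have := two_choose2 n
      push_cast at this ⊢
      ring_nf
      ring_nf at this
      linarith

lemma choose2_sub {M t : ℕ} (htM : t ≤ M) :
    (((M-t).choose 2 : ℕ):ℤ)
      = ((M.choose 2 : ℕ):ℤ) - (t:ℤ)*(M:ℤ) + ((t.choose 2 : ℕ):ℤ) + t := by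
  have h1 := two_choose2 (M-t)
  have h2 := two_choose2 M
  have h3 := two_choose2 t
  have hc : ((M-t:ℕ):ℤ) = (M:ℤ) - (t:ℤ) := by
    omega
  rw [hc] at h1
  nlinarith [h1, h2, h3]

lemma Fq_sym (hne : ξ ≠ 0) (lam : ℤ) (M : ℕ) (γ : ℤ) :
    Fq ξ lam M γ
      = (-1:ℂ)^M * ξ^(γ*(M:ℤ) + lam*((M.choose 2 : ℕ):ℤ))
        * Fq ξ lam M (lam*(1-(M:ℤ)) - γ) := by
  unfold Fq
  rw [Finset.mul_sum]
  rw [← Finset.sum_range_reflect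
    (fun t => (-1:ℂ)^t * ξ^(γ*(t:ℤ) + lam*((t.choose 2 : ℕ):ℤ)) * gb ξ M t) (M+1)]
  refine Finset.sum_congr rfl (fun t ht => ?_)
  have htM : t ≤ M := by
    have := Finset.mem_range.1 ht; omega
  have hidx : M + 1 - 1 - t = M - t := by omega
  rw [hidx]
  rw [← gb_symm M t htM]
  have h2 : (-1:ℂ)^t * (-1)^t = 1 := by
    rw [← pow_add]
    exact Even.neg_one_pow ⟨t, rfl⟩
  have hsign : (-1:ℂ)^(M-t) = (-1)^M * (-1)^t := by
    have h1 : (-1:ℂ)^(M-t) * (-1)^t = (-1)^M := by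
      rw [← pow_add]
      congr 1
      omega
    calc (-1:ℂ)^(M-t) = (-1)^(M-t) * ((-1)^t * (-1)^t) := by rw [h2, mul_one]
      _ = ((-1)^(M-t) * (-1)^t) * (-1)^t := by ring
      _ = (-1)^M * (-1)^t := by rw [h1]
  have hexp : ξ^(γ*((M-t:ℕ):ℤ) + lam*(((M-t).choose 2 : ℕ):ℤ))
      = ξ^(γ*(M:ℤ) + lam*((M.choose 2 : ℕ):ℤ))
        * ξ^((lam*(1-(M:ℤ))-γ)*(t:ℤ) + lam*((t.choose 2 : ℕ):ℤ)) := by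
    refine zsplit hne ?_
    rw [choose2_sub htM]
    have hc : ((M-t:ℕ):ℤ) = (M:ℤ) - (t:ℤ) := by omega
    rw [hc]
    ring
  rw [hsign, hexp]
  ring

lemma hne_of {r : ℕ} (hξ : IsPrimitiveRoot ξ r) (hr : 0 < r) : ξ ≠ 0 := by
  intro h0
  have := hξ.pow_eq_one
  rw [h0] at this
  simp [zero_pow hr.ne'] at this

lemma xi_mem : ξ ∈ Subring.closure ({ξ} : Set ℂ) :=
  Subring.subset_closure (Set.mem_singleton ξ)

lemma zpow_mem {r : ℕ} (hξ : IsPrimitiveRoot ξ r) (hr : 0 < r) (e : ℤ) :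
    ξ^e ∈ Subring.closure ({ξ} : Set ℂ) := by
  have hne : ξ ≠ 0 := hne_of hξ hr
  have h0 : ξ^(r:ℤ) = 1 := by
    rw [zpow_natCast]; exact hξ.pow_eq_one
  have hr0 : (r:ℤ) ≠ 0 := by exact_mod_cast hr.ne'
  have hsplit : ξ^e = ξ^(e % (r:ℤ)) := by
    calc ξ^e = ξ^(e % (r:ℤ) + (r:ℤ) * (e / (r:ℤ))) := by rw [Int.emod_add_mul_ediv e (r:ℤ)]
      _ = ξ^(e % (r:ℤ)) * (ξ^(r:ℤ))^(e / (r:ℤ)) := by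
          rw [zpow_add₀ hne, zpow_mul]
      _ = ξ^(e % (r:ℤ)) := by rw [h0, one_zpow, mul_one]
  rw [hsplit]
  have hnn : 0 ≤ e % (r:ℤ) := Int.emod_nonneg e hr0
  have : ξ^(e % (r:ℤ)) = ξ^((e % (r:ℤ)).toNat) := by
    rw [← zpow_natCast]
    congr 1
    exact (Int.toNat_of_nonneg hnn).symm
  rw [this]
  exact pow_mem xi_mem _

lemma xXi_mem (k : ℕ) : xXi ξ k ∈ Subring.closure ({ξ} : Set ℂ) := by
  unfold xXi
  exact prod_mem (fun j _ => sub_mem (one_mem _) (pow_mem xi_mem _))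

lemma xXi_zero : xXi ξ 0 = 1 := by
  unfold xXi
  rw [Finset.Icc_eq_empty (by omega)]
  exact Finset.prod_empty

lemma xXi_succ_odd {M : ℕ} (hM : M % 2 = 0) :
    xXi ξ (M+1) = xXi ξ M * (1 - ξ^(M+1)) := by
  unfold xXi
  rw [show (M+1)/2 = M/2 by omega]
  exact Finset.prod_Icc_succ_top (by omega) _

lemma xXi_succ_even {M : ℕ} (hM : M % 2 = 1) :
    xXi ξ (M+1) * (1 - ξ^((M+1)/2)) = xXi ξ M * (1 - ξ^(M+1)) := by
  unfold xXi
  have h1 : Finset.Icc ((M+1)/2 + 1) (M+1) = Finset.Ico ((M+1)/2 + 1) (M+2) := by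
    exact (Finset.Ico_add_one_right_eq_Icc ((M+1)/2 + 1) (M+1)).symm
  have h2 : Finset.Icc (M/2 + 1) M = Finset.Ico ((M+1)/2) (M+1) := by
    rw [Finset.Ico_add_one_right_eq_Icc, show M/2 + 1 = (M+1)/2 by omega]
  rw [h1, h2]
  rw [mul_comm, ← Finset.prod_eq_prod_Ico_succ_bot (show (M+1)/2 < M+2 by omega)
    (fun j => 1 - ξ^j)]
  rw [Finset.prod_Ico_succ_top (show (M+1)/2 ≤ M+1 by omega)]

theorem core_div {r : ℕ} (hξ : IsPrimitiveRoot ξ r) (hr : 0 < r) {lam : ℤ} (hlam : Odd lam) :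
    ∀ M : ℕ, M ≤ r - 1 → ∀ γ : ℤ,
      ∃ c ∈ Subring.closure ({ξ} : Set ℂ), Fq ξ lam M γ = xXi ξ M * c := by
  intro M
  induction M with
  | zero =>
      intro _ γ
      exact ⟨1, one_mem _, by rw [Fq_zero_M, xXi_zero, one_mul]⟩
  | succ M ih =>
      intro hM1 γ
      have hM : M ≤ r - 1 := by omega
      have hne : ξ ≠ 0 := hne_of hξ hr
      -- telescoping steps
      have steps : ∀ (d : ℕ) (γ' : ℤ), ∃ c ∈ Subring.closure ({ξ} : Set ℂ),
          Fq ξ lam (M+1) γ' - Fq ξ lam (M+1) (γ' + (d:ℤ))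
            = (1 - ξ^((M:ℤ)+1)) * (xXi ξ M * c) := by
        intro d
        induction d with
        | zero => exact fun γ' => ⟨0, zero_mem _, by simp⟩
        | succ d ihd =>
            intro γ'
            obtain ⟨c1, hc1, e1⟩ := ihd γ'
            obtain ⟨c2, hc2, e2⟩ := ih hM (γ' + (d:ℤ) + lam)
            refine ⟨c1 - ξ^(γ'+(d:ℤ)) * c2,
              sub_mem hc1 (mul_mem (zpow_mem hξ hr _) hc2), ?_⟩
            have hD := Fq_D1 hne lam M (γ' + (d:ℤ))
            rw [show ((d+1:ℕ):ℤ) = (d:ℤ)+1 by push_cast; ring,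
              show γ' + ((d:ℤ)+1) = (γ' + (d:ℤ)) + 1 by ring]
            linear_combination e1 + hD - (ξ^(γ'+(d:ℤ)) * (1 - ξ^((M:ℤ)+1))) * e2
      -- reach any γ from any γ'
      have reach : ∀ γ0 γ1 : ℤ, ∃ c ∈ Subring.closure ({ξ} : Set ℂ),
          Fq ξ lam (M+1) γ0 = Fq ξ lam (M+1) γ1
            + (1 - ξ^((M:ℤ)+1)) * (xXi ξ M * c) := by
        intro γ0 γ1
        have hr0 : (r:ℤ) ≠ 0 := by exact_mod_cast hr.ne'
        have hdnn : 0 ≤ (γ1 - γ0) % (r:ℤ) := Int.emod_nonneg _ hr0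
        set d : ℕ := ((γ1 - γ0) % (r:ℤ)).toNat with hd
        have hdval : (d:ℤ) = (γ1 - γ0) % (r:ℤ) := Int.toNat_of_nonneg hdnn
        have hdvd : (r:ℤ) ∣ (γ0 + (d:ℤ) - γ1) := by
          refine ⟨-((γ1 - γ0) / (r:ℤ)), ?_⟩
          have h := Int.emod_add_mul_ediv (γ1 - γ0) (r:ℤ)
          rw [hdval]
          linarith [h]
        obtain ⟨c, hc, e⟩ := steps d γ0
        have heq : Fq ξ lam (M+1) (γ0 + (d:ℤ)) = Fq ξ lam (M+1) γ1 :=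
          Fq_congr hξ hne lam (M+1) hdvd
        exact ⟨c, hc, by linear_combination e + heq⟩
      rcases Nat.even_or_odd M with hMe | hMo
      · -- M even, M+1 odd : anchor γ₁ with F(γ₁) = 0
        obtain ⟨m2, hm2⟩ := hMe
        have hMc : (M:ℤ) = (m2:ℤ) + (m2:ℤ) := by exact_mod_cast hm2
        have hfix : lam*(1-((M+1:ℕ):ℤ)) - (-(lam * (m2:ℤ))) = -(lam * (m2:ℤ)) := by
          push_cast
          linear_combination (-lam) * hMc
        have hw : (-(lam * (m2:ℤ)))*((M+1:ℕ):ℤ) + lam*(((M+1).choose 2 : ℕ):ℤ) = 0 := by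
          have h2 := two_choose2 (M+1)
          push_cast at h2 ⊢
          have h2T : 2*((-(lam * (m2:ℤ)))*((M:ℤ)+1) + lam*(((M+1).choose 2 : ℕ):ℤ)) = 0 := by
            push_cast
            linear_combination lam*h2 + lam*((M:ℤ)+1)*hMc
          push_cast at h2T
          linarith [h2T]
        have hsym := Fq_sym hne lam (M+1) (-(lam * (m2:ℤ)))
        rw [hfix, hw, zpow_zero] at hsym
        have hodd1 : Odd (M+1) := ⟨m2, by omega⟩
        rw [hodd1.neg_one_pow] at hsym
        have hzero : Fq ξ lam (M+1) (-(lam * (m2:ℤ))) = 0 := by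
          have h2 : (2:ℂ) * Fq ξ lam (M+1) (-(lam * (m2:ℤ))) = 0 := by
            linear_combination hsym
          rcases mul_eq_zero.1 h2 with h | h
          · norm_num at h
          · exact h
        obtain ⟨c, hc, e⟩ := reach γ (-(lam * (m2:ℤ)))
        refine ⟨c, hc, ?_⟩
        rw [e, hzero, zero_add]
        rw [xXi_succ_odd (by omega)]
        rw [zpow_cast_succ]
        ring
      · -- M odd, M+1 even : anchor γ₂
        obtain ⟨m2, hm2⟩ := hMo
        obtain ⟨μ, hμ⟩ := hlam
        have hMc : (M:ℤ) = 2*(m2:ℤ)+1 := by exact_mod_cast hm2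
        obtain ⟨γ2, hγ2⟩ : ∃ g : ℤ, g = -(μ*(M:ℤ) + (m2:ℤ) + 1) := ⟨_, rfl⟩
        have h2γ : 2*γ2 = -(lam*(M:ℤ)) - 1 := by
          rw [hγ2, hμ]; linear_combination hMc
        have harg : lam*(1-((M+1:ℕ):ℤ)) - γ2 = γ2 + 1 := by
          push_cast
          linear_combination -h2γ
        have h2 := two_choose2 (M+1)
        push_cast at h2
        have hw2 : γ2*((M+1:ℕ):ℤ) + lam*(((M+1).choose 2 : ℕ):ℤ) = -(((m2+1:ℕ)):ℤ) := by
          have key : 2*(γ2*((M:ℤ)+1) + lam*(((M+1).choose 2 : ℕ):ℤ))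
              = 2*(-((m2:ℤ)+1)) := by
            linear_combination ((M:ℤ)+1)*h2γ + lam*h2 - hMc
          push_cast at key ⊢
          linarith [key]
        have hsym := Fq_sym hne lam (M+1) γ2
        rw [harg, hw2] at hsym
        have heven1 : Even (M+1) := ⟨m2+1, by omega⟩
        rw [heven1.neg_one_pow, one_mul] at hsym
        have hsym2 : Fq ξ lam (M+1) (γ2+1) = ξ^(((m2+1:ℕ)):ℤ) * Fq ξ lam (M+1) γ2 := by
          have hz : ξ^(((m2+1:ℕ)):ℤ) * ξ^(-(((m2+1:ℕ)):ℤ)) = 1 := by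
            rw [← zpow_add₀ hne, add_neg_cancel, zpow_zero]
          rw [hsym, ← mul_assoc, hz, one_mul]
        have hD := Fq_D1 hne lam M γ2
        obtain ⟨c0, hc0, e0⟩ := ih hM (γ2 + lam)
        have hMsplit : (M:ℤ)+1 = ((m2+1:ℕ):ℤ) + ((m2+1:ℕ):ℤ) := by
          push_cast; linarith [hMc]
        have hfac : ξ^((M:ℤ)+1) = ξ^(((m2+1:ℕ)):ℤ) * ξ^(((m2+1:ℕ)):ℤ) := zsplit hne hMsplit
        have hpne : (1:ℂ) - ξ^(m2+1) ≠ 0 := by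
          have h1 : ξ^(m2+1) ≠ 1 :=
            hξ.pow_ne_one_of_pos_of_lt (by omega) (by omega)
          exact sub_ne_zero.2 (Ne.symm h1)
        have hpow_ne : (1:ℂ) - ξ^(((m2+1:ℕ)):ℤ) ≠ 0 := by
          rw [zpow_natCast]; exact hpne
        have hball : (1 - ξ^(((m2+1:ℕ)):ℤ)) * Fq ξ lam (M+1) γ2
            = (1 - ξ^(((m2+1:ℕ)):ℤ))
              * (-(ξ^γ2) * ((1 + ξ^(((m2+1:ℕ)):ℤ)) * (xXi ξ M * c0))) := by
          linear_combination hD + hsym2 - (ξ^γ2) * (1 - ξ^((M:ℤ)+1)) * e0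
            + (ξ^γ2) * (xXi ξ M) * c0 * hfac
        have hkey : Fq ξ lam (M+1) γ2
            = -(ξ^γ2) * ((1 + ξ^(((m2+1:ℕ)):ℤ)) * (xXi ξ M * c0)) :=
          mul_left_cancel₀ hpow_ne hball
        rw [zpow_natCast] at hkey
        have hP : (ξ:ℂ)^(M+1) = ξ^(m2+1) * ξ^(m2+1) := by
          rw [← pow_add]
          congr 1
          omega
        have hxx : xXi ξ (M+1) * (1 - ξ^(m2+1)) = xXi ξ M * (1 - ξ^(M+1)) := by
          have h := xXi_succ_even (ξ := ξ) (M := M) (by omega)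
          rw [show (M+1)/2 = m2+1 by omega] at h
          exact h
        have hxx2 : xXi ξ (M+1) = xXi ξ M * (1 + ξ^(m2+1)) := by
          refine mul_left_cancel₀ hpne ?_
          linear_combination hxx - (xXi ξ M) * hP
        obtain ⟨c, hc, e⟩ := reach γ γ2
        refine ⟨-(ξ^γ2)*c0 + (1 - ξ^(m2+1))*c,
          add_mem (mul_mem (neg_mem (zpow_mem hξ hr _)) hc0)
            (mul_mem (sub_mem (one_mem _) (pow_mem xi_mem _)) hc), ?_⟩
        rw [zpow_cast_succ] at e
        linear_combination e + hkey
          + ((ξ^γ2)*c0 - (1 - ξ^(m2+1))*c) * hxx2 - (xXi ξ M * c) * hP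

/-- `(q;q)_k` at `ξ` (the denominator of `binomXi`). -/
def qfac (ξ : ℂ) (k : ℕ) : ℂ := ∏ i ∈ Finset.range k, (1 - ξ^(i+1))

/-- The master sum `V_k(α,β,b) = Σ_{n<r} ξ^{αn²+βn} Π_{i<k}(1-ξ^{n+b+i+1})`. -/
def Vk (ξ : ℂ) (r : ℕ) (α β b : ℤ) (k : ℕ) : ℂ :=
  ∑ n ∈ Finset.range r, ξ^(α*(n:ℤ)^2 + β*(n:ℤ))
    * ∏ i ∈ Finset.range k, (1 - ξ^((n:ℤ) + b + (i:ℤ) + 1))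

lemma zpow_eq_of_dvd {r : ℕ} (hξ : IsPrimitiveRoot ξ r) (hne : ξ ≠ 0) {e e' : ℤ}
    (h : (r:ℤ) ∣ (e - e')) : ξ^e = ξ^e' := by
  have h1 : ξ^(e - e') = 1 := (hξ.zpow_eq_one_iff_dvd _).2 h
  calc ξ^e = ξ^(e - e') * ξ^e' := zsplit hne (by ring)
    _ = ξ^e' := by rw [h1, one_mul]

lemma sum_shift {r : ℕ} (G : ℤ → ℂ) (hG : ∀ x : ℤ, G (x + r) = G x) :
    ∑ n ∈ Finset.range r, G ((n:ℤ)+1) = ∑ n ∈ Finset.range r, G (n:ℤ) := by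
  cases r with
  | zero => simp
  | succ r' =>
      have h1 : ∀ n : ℕ, G ((n:ℤ)+1) = G ((n+1 : ℕ):ℤ) := fun n =>
        congrArg G (by push_cast; ring)
      have h2 := Finset.sum_range_succ' (fun n : ℕ => G (n:ℤ)) (r'+1)
      have h3 := Finset.sum_range_succ (fun n : ℕ => G (n:ℤ)) (r'+1)
      have h4 : G ((r'+1 : ℕ):ℤ) = G ((0:ℕ):ℤ) := by
        have := hG 0
        rw [zero_add] at this
        simpa using this
      calc ∑ n ∈ Finset.range (r'+1), G ((n:ℤ)+1)
          = ∑ n ∈ Finset.range (r'+1), G ((n+1 : ℕ):ℤ) := by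
            exact Finset.sum_congr rfl (fun n _ => h1 n)
        _ = ∑ n ∈ Finset.range (r'+1), G (n:ℤ) := by
            have := h2.symm.trans h3
            -- this : Σ G(n+1) + G 0 = Σ G n + G (r'+1)
            have h5 : G (((r'+1) : ℕ):ℤ) = G ((0:ℕ):ℤ) := h4
            linear_combination this + h5

section Vlemmas

variable {r : ℕ}

lemma V_P1 (hne : ξ ≠ 0) (α β b : ℤ) (m : ℕ) :
    Vk ξ r α β b (m+1)
      = Vk ξ r α β b m - ξ^(b + (m:ℤ) + 1) * Vk ξ r α (β+1) b m := by
  unfold Vk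
  rw [Finset.mul_sum, ← Finset.sum_sub_distrib]
  refine Finset.sum_congr rfl (fun n _ => ?_)
  rw [Finset.prod_range_succ]
  have h1 : ξ^((n:ℤ) + b + (m:ℤ) + 1) = ξ^((n:ℤ)) * ξ^(b + (m:ℤ) + 1) :=
    zsplit hne (by ring)
  have h2 : ξ^(α*(n:ℤ)^2 + (β+1)*(n:ℤ)) = ξ^(α*(n:ℤ)^2 + β*(n:ℤ)) * ξ^((n:ℤ)) :=
    zsplit hne (by ring)
  rw [h1, h2]
  ring

lemma V_P2 (hne : ξ ≠ 0) (α β b : ℤ) (m : ℕ) :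
    Vk ξ r α β b (m+1)
      = Vk ξ r α β (b+1) m - ξ^(b+1) * Vk ξ r α (β+1) (b+1) m := by
  unfold Vk
  rw [Finset.mul_sum, ← Finset.sum_sub_distrib]
  refine Finset.sum_congr rfl (fun n _ => ?_)
  rw [Finset.prod_range_succ' (fun i => 1 - ξ^((n:ℤ) + b + (i:ℤ) + 1)) m]
  have hprod : ∀ i ∈ Finset.range m,
      (1 - ξ^((n:ℤ) + b + ((i+1 : ℕ):ℤ) + 1)) = (1 - ξ^((n:ℤ) + (b+1) + (i:ℤ) + 1)) := by
    intro i _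
    congr 1
    congr 1
    push_cast
    ring
  rw [Finset.prod_congr rfl hprod]
  have h1 : ξ^((n:ℤ) + b + ((0:ℕ):ℤ) + 1) = ξ^((n:ℤ)) * ξ^(b+1) := zsplit hne (by push_cast; ring)
  have h2 : ξ^(α*(n:ℤ)^2 + (β+1)*(n:ℤ)) = ξ^(α*(n:ℤ)^2 + β*(n:ℤ)) * ξ^((n:ℤ)) :=
    zsplit hne (by ring)
  rw [h1, h2]
  ring

lemma V_P3 (hξ : IsPrimitiveRoot ξ r) (hne : ξ ≠ 0) (α β b : ℤ) (m : ℕ) :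
    Vk ξ r α β b m = ξ^(α - β) * Vk ξ r α (β - 2*α) (b-1) m := by
  set G : ℤ → ℂ := fun x => ξ^(α*x^2 + (β-2*α)*x)
    * ∏ i ∈ Finset.range m, (1 - ξ^(x + (b-1) + (i:ℤ) + 1)) with hGdef
  have hG : ∀ x : ℤ, G (x + r) = G x := by
    intro x
    rw [hGdef]
    simp only
    have he : ξ^(α*(x+(r:ℤ))^2 + (β-2*α)*(x+(r:ℤ))) = ξ^(α*x^2 + (β-2*α)*x) :=
      zpow_eq_of_dvd hξ hne ⟨α*x*2 + α*(r:ℤ) + (β-2*α), by ring⟩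
    have hp : ∀ i ∈ Finset.range m,
        (1 - ξ^((x+(r:ℤ)) + (b-1) + (i:ℤ) + 1)) = (1 - ξ^(x + (b-1) + (i:ℤ) + 1)) := by
      intro i _
      congr 1
      exact zpow_eq_of_dvd hξ hne ⟨1, by ring⟩
    rw [he, Finset.prod_congr rfl hp]
  have hshift : ∑ n ∈ Finset.range r, G ((n:ℤ)+1) = ∑ n ∈ Finset.range r, G (n:ℤ) :=
    sum_shift G hG
  have hterm : ∀ n ∈ Finset.range r,
      G ((n:ℤ)+1)
      = ξ^(β - α) * (ξ^(α*(n:ℤ)^2 + β*(n:ℤ))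
        * ∏ i ∈ Finset.range m, (1 - ξ^((n:ℤ) + b + (i:ℤ) + 1))) := by
    intro n _
    rw [hGdef]
    simp only
    have he : ξ^(α*((n:ℤ)+1)^2 + (β-2*α)*((n:ℤ)+1))
        = ξ^(β - α) * ξ^(α*(n:ℤ)^2 + β*(n:ℤ)) := zsplit hne (by ring)
    have hp : ∀ i ∈ Finset.range m,
        (1 - ξ^(((n:ℤ)+1) + (b-1) + (i:ℤ) + 1)) = (1 - ξ^((n:ℤ) + b + (i:ℤ) + 1)) := by
      intro i _
      congr 2
      ring
    rw [he, Finset.prod_congr rfl hp]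
    ring
  have hmain : Vk ξ r α (β - 2*α) (b-1) m = ξ^(β - α) * Vk ξ r α β b m := by
    unfold Vk
    rw [← hshift, Finset.mul_sum]
    exact Finset.sum_congr rfl hterm
  rw [hmain, ← mul_assoc, ← zpow_add₀ hne]
  rw [show (α - β) + (β - α) = 0 by ring, zpow_zero, one_mul]

lemma V_SS (hξ : IsPrimitiveRoot ξ r) (hne : ξ ≠ 0) (α β b : ℤ) (m : ℕ) :
    Vk ξ r α β b (m+1) - ξ^(α+β) * Vk ξ r α (β+2*α) b (m+1)
      = ξ^b * (1 - ξ^((m:ℤ)+1)) * Vk ξ r α (β+1) b m := by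
  have hP1 := V_P1 (r := r) hne α β b m
  have hP2 := V_P2 (r := r) hne α β (b-1) m
  rw [show b-1+1 = b by ring] at hP2
  have hP3 := V_P3 hξ hne α (β+2*α) b (m+1)
  rw [show β+2*α - 2*α = β by ring] at hP3
  -- hP3 : Vk (β+2α) b (m+1) = ξ^{α-(β+2α)} * Vk β (b-1) (m+1)
  have hz1 : ξ^(α+β) * ξ^(α - (β+2*α)) = 1 := by
    rw [← zpow_add₀ hne, show (α+β) + (α - (β+2*α)) = 0 by ring, zpow_zero]
  have hz2 : ξ^(b + (m:ℤ) + 1) = ξ^b * ξ^((m:ℤ)+1) := zsplit hne (by ring)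
  calc Vk ξ r α β b (m+1) - ξ^(α+β) * Vk ξ r α (β+2*α) b (m+1)
      = Vk ξ r α β b (m+1) - (ξ^(α+β) * ξ^(α - (β+2*α))) * Vk ξ r α β (b-1) (m+1) := by
        rw [hP3]; ring
    _ = Vk ξ r α β b (m+1) - Vk ξ r α β (b-1) (m+1) := by rw [hz1, one_mul]
    _ = ξ^b * (1 - ξ^((m:ℤ)+1)) * Vk ξ r α (β+1) b m := by
        rw [hP1, hP2, hz2]
        ring

end Vlemmas

lemma qfac_succ (k : ℕ) : qfac ξ (k+1) = qfac ξ k * (1 - ξ^(k+1)) :=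
  Finset.prod_range_succ _ _

theorem ide {r : ℕ} (hξ : IsPrimitiveRoot ξ r) (hr : 0 < r) (α : ℤ) :
    ∀ j : ℕ, j ≤ r - 1 → ∀ β b : ℤ,
      Vk ξ r α β b (r-1-j)
        = qfac ξ (r-1-j)
          * (ξ^(α*b^2 - β*b) * Fq ξ (2*α+1) j (α + β - 2*α*b - (j:ℤ))) := by
  have hne : ξ ≠ 0 := hne_of hξ hr
  have hrz : (r:ℤ) ≠ 0 := by exact_mod_cast hr.ne'
  have hrpos : (0:ℤ) < (r:ℤ) := by exact_mod_cast hr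
  intro j
  induction j with
  | zero =>
      intro _ β b
      rw [Fq_zero_M, mul_one]
      simp only [Nat.sub_zero]
      unfold Vk
      have hnn : 0 ≤ (-b) % (r:ℤ) := Int.emod_nonneg _ hrz
      have hlt : (-b) % (r:ℤ) < (r:ℤ) := Int.emod_lt_of_pos _ hrpos
      set n0 : ℕ := ((-b) % (r:ℤ)).toNat with hn0def
      have hval : (n0:ℤ) = (-b) % (r:ℤ) := Int.toNat_of_nonneg hnn
      have hn0r : n0 < r := by omega
      have hdvd : (r:ℤ) ∣ ((n0:ℤ) + b) := by
        refine ⟨-((-b) / (r:ℤ)), ?_⟩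
        have h := Int.emod_add_mul_ediv (-b) (r:ℤ)
        rw [hval]
        linarith
      rw [Finset.sum_eq_single n0]
      · obtain ⟨q, hq⟩ := hdvd
        have hexp : ξ^(α*(n0:ℤ)^2 + β*(n0:ℤ)) = ξ^(α*b^2 - β*b) := by
          apply zpow_eq_of_dvd hξ hne
          exact ⟨(α*((n0:ℤ) - b) + β) * q, by linear_combination (α*((n0:ℤ)-b)+β) * hq⟩
        have hprod : ∀ i ∈ Finset.range (r-1),
            (1 - ξ^((n0:ℤ) + b + (i:ℤ) + 1)) = (1 - ξ^(i+1)) := by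
          intro i _
          congr 1
          have h1 : ξ^((n0:ℤ) + b + (i:ℤ) + 1) = ξ^((i:ℤ)+1) :=
            zpow_eq_of_dvd hξ hne ⟨q, by linarith⟩
          rw [h1, show ((i:ℤ)+1) = ((i+1:ℕ):ℤ) by push_cast; ring, zpow_natCast]
        rw [Finset.prod_congr rfl hprod, hexp]
        unfold qfac
        ring
      · intro n hn hne_n
        have hnd : ¬ (r:ℤ) ∣ ((n:ℤ) + b) := by
          intro hdd
          have h1 : (r:ℤ) ∣ ((n:ℤ) - (n0:ℤ)) := by
            obtain ⟨q1, hq1⟩ := hdd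
            obtain ⟨q2, hq2⟩ := hdvd
            exact ⟨q1 - q2, by linarith⟩
          have h2 : (n:ℤ) - (n0:ℤ) = 0 := by
            refine Int.eq_zero_of_abs_lt_dvd h1 ?_
            have hnr : n < r := Finset.mem_range.1 hn
            rw [abs_lt]
            omega
          exact hne_n (by omega)
        have hnn2 : 0 ≤ (-((n:ℤ)+b+1)) % (r:ℤ) := Int.emod_nonneg _ hrz
        have hlt2 : (-((n:ℤ)+b+1)) % (r:ℤ) < (r:ℤ) := Int.emod_lt_of_pos _ hrpos
        have hdvd2 : (r:ℤ) ∣ ((n:ℤ) + b + ((-((n:ℤ)+b+1)) % (r:ℤ)) + 1) := by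
          refine ⟨-((-((n:ℤ)+b+1)) / (r:ℤ)), ?_⟩
          have h := Int.emod_add_mul_ediv (-((n:ℤ)+b+1)) (r:ℤ)
          linarith
        have hdne : (-((n:ℤ)+b+1)) % (r:ℤ) ≠ (r:ℤ) - 1 := by
          intro hEq
          apply hnd
          obtain ⟨q, hq⟩ := hdvd2
          rw [hEq] at hq
          exact ⟨q - 1, by linarith⟩
        set i0 : ℕ := ((-((n:ℤ)+b+1)) % (r:ℤ)).toNat with hi0def
        have hi0val : (i0:ℤ) = (-((n:ℤ)+b+1)) % (r:ℤ) := Int.toNat_of_nonneg hnn2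
        have hi0lt : i0 < r - 1 := by omega
        apply mul_eq_zero_of_right
        apply Finset.prod_eq_zero (Finset.mem_range.2 hi0lt)
        have hone : ξ^((n:ℤ)+b+(i0:ℤ)+1) = 1 := by
          refine (hξ.zpow_eq_one_iff_dvd _).2 ?_
          rw [hi0val]
          exact hdvd2
        rw [hone, sub_self]
      · intro habs
        exact absurd (Finset.mem_range.2 hn0r) habs
  | succ j ihj =>
      intro hj1 β b
      have hj : j ≤ r - 1 := by omega
      have hk : r - 1 - j = (r - 1 - (j+1)) + 1 := by omega
      set k' : ℕ := r - 1 - (j+1) with hk'def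
      have hSS := V_SS hξ hne α (β-1) b k'
      have hIH1 := ihj hj (β-1) b
      have hIH2 := ihj hj (β-1+2*α) b
      rw [hk] at hIH1 hIH2
      rw [show β-1+1 = β by ring] at hSS
      rw [hIH1, hIH2] at hSS
      set γa : ℤ := α + (β-1) - 2*α*b - (j:ℤ) with hγa
      rw [show α + (β-1+2*α) - 2*α*b - (j:ℤ) = γa + 2*α by rw [hγa]; ring] at hSS
      have hR2 := Fq_R2 hne (2*α+1) j γa
      rw [show γa + (2*α+1) - 1 = γa + 2*α by ring] at hR2
      have hz1 : ξ^(α+(β-1)) * ξ^(α*b^2 - (β-1+2*α)*b)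
          = ξ^(α*b^2 - (β-1)*b) * ξ^(γa + (j:ℤ)) := by
        rw [← zpow_add₀ hne, ← zpow_add₀ hne]
        congr 1
        rw [hγa]
        ring
      have hcomb : ξ^b * (1 - ξ^((k':ℤ)+1)) * Vk ξ r α β b k'
          = qfac ξ (k'+1) * (ξ^(α*b^2 - (β-1)*b) * Fq ξ (2*α+1) (j+1) γa) := by
        rw [hR2]
        linear_combination -hSS
          - (qfac ξ (k'+1)) * (Fq ξ (2*α+1) j (γa + 2*α)) * hz1
      have hne2 : (1:ℂ) - ξ^((k':ℤ)+1) ≠ 0 := by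
        rw [zpow_cast_succ]
        have h1 : ξ^(k'+1) ≠ 1 :=
          hξ.pow_ne_one_of_pos_of_lt (by omega) (by omega)
        exact sub_ne_zero.2 (Ne.symm h1)
      have hbne : ξ^b ≠ 0 := zpow_ne_zero _ hne
      have hfin : Vk ξ r α β b k'
          = qfac ξ k' * (ξ^(α*b^2 - (β-1)*b - b) * Fq ξ (2*α+1) (j+1) γa) := by
        have hsplitb : ξ^(α*b^2 - (β-1)*b) = ξ^b * ξ^(α*b^2 - (β-1)*b - b) :=
          zsplit hne (by ring)
        have hqf : qfac ξ (k'+1) = qfac ξ k' * (1 - ξ^((k':ℤ)+1)) := by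
          rw [qfac_succ, zpow_cast_succ]
        apply mul_left_cancel₀ hbne
        apply mul_left_cancel₀ hne2
        calc (1 - ξ^((k':ℤ)+1)) * (ξ^b * Vk ξ r α β b k')
            = ξ^b * (1 - ξ^((k':ℤ)+1)) * Vk ξ r α β b k' := by ring
          _ = qfac ξ (k'+1) * (ξ^(α*b^2 - (β-1)*b) * Fq ξ (2*α+1) (j+1) γa) := hcomb
          _ = (1 - ξ^((k':ℤ)+1)) * (ξ^b * (qfac ξ k' * (ξ^(α*b^2 - (β-1)*b - b)
              * Fq ξ (2*α+1) (j+1) γa))) := by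
              rw [hqf, hsplitb]
              ring
      rw [hfin]
      rw [show α*b^2 - (β-1)*b - b = α*b^2 - β*b by ring,
        show α + β - 2*α*b - ((j+1:ℕ):ℤ) = γa by rw [hγa]; push_cast; ring]

lemma gb_mem : ∀ M t : ℕ, gb ξ M t ∈ Subring.closure ({ξ} : Set ℂ)
  | 0, 0 => Subring.one_mem _
  | 0, _+1 => by
      rw [show gb ξ 0 (_+1) = 0 from rfl]; exact Subring.zero_mem _
  | M+1, 0 => by rw [gb_zero_right]; exact Subring.one_mem _
  | M+1, t+1 => by
      rw [gb_pascal1]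
      have hx : ξ ∈ Subring.closure ({ξ} : Set ℂ) :=
        Subring.subset_closure (Set.mem_singleton ξ)
      exact add_mem (mul_mem (gb_mem M (t+1)) (pow_mem hx _)) (gb_mem M t)

end Stmt8


lemma Stmt8.qfac_def (ξ : ℂ) (k : ℕ) :
    Stmt8.qfac ξ k = ∏ i ∈ Finset.range k, (1 - ξ^(i+1)) := rfl

theorem stmt_8 (r : ℕ) (hr : 2 ≤ r) (ξ : ℂ) (hξ : IsPrimitiveRoot ξ r)
    (a : ℤ) (k : ℕ) (hk : k < r) (Q : ℤ → ℤ) (hQ : IsIntegralQuadraticForm Q) :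
    ∃ c ∈ Subring.closure ({ξ} : Set ℂ),
      ∑ n ∈ Finset.range r, ξ ^ Q (n : ℤ) * binomXi ξ ((n : ℤ) + a) k =
        xXi ξ (r - 1 - k) * c := by
  obtain ⟨α, β, a0, hQf⟩ := hQ
  have hr0 : 0 < r := by omega
  have hne : ξ ≠ 0 := Stmt8.hne_of hξ hr0
  set b : ℤ := a - (k:ℤ) with hb
  have hqne : Stmt8.qfac ξ k ≠ 0 := by
    rw [Stmt8.qfac_def]
    refine Finset.prod_ne_zero_iff.2 (fun i hi => ?_)
    have h1 : ξ^(i+1) ≠ 1 :=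
      hξ.pow_ne_one_of_pos_of_lt (by omega)
        (by have := Finset.mem_range.1 hi; omega)
    exact sub_ne_zero.2 (Ne.symm h1)
  have hstep1 : ∑ n ∈ Finset.range r, ξ ^ Q (n:ℤ) * binomXi ξ ((n:ℤ) + a) k
      = ξ^(a0) * Stmt8.Vk ξ r α β b k / Stmt8.qfac ξ k := by
    unfold Stmt8.Vk
    rw [Finset.mul_sum, Finset.sum_div]
    refine Finset.sum_congr rfl (fun n _ => ?_)
    unfold binomXi
    rw [hQf (n:ℤ)]
    have hz : ξ^(α*(n:ℤ)^2 + β*(n:ℤ) + a0)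
        = ξ^(a0) * ξ^(α*(n:ℤ)^2+β*(n:ℤ)) := Stmt8.zsplit hne (by ring)
    have hprod : ∀ i ∈ Finset.range k,
        (1 - ξ^((n:ℤ) + a - (k:ℤ) + 1 + (i:ℤ))) = (1 - ξ^((n:ℤ) + b + (i:ℤ) + 1)) := by
      intro i _
      congr 2
      rw [hb]
      ring
    rw [Finset.prod_congr rfl hprod, ← Stmt8.qfac_def, hz]
    ring
  have hide := Stmt8.ide hξ hr0 α (r-1-k) (by omega) β b
  rw [show r-1-(r-1-k) = k by omega] at hide
  have hodd : Odd (2*α+1) := ⟨α, by ring⟩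
  obtain ⟨c, hc, hFq⟩ := Stmt8.core_div hξ hr0 hodd (r-1-k) (by omega)
    (α + β - 2*α*b - ((r-1-k:ℕ):ℤ))
  refine ⟨ξ^(a0 + (α*b^2 - β*b)) * c,
    mul_mem (Stmt8.zpow_mem hξ hr0 _) hc, ?_⟩
  rw [hstep1, hide, hFq]
  rw [mul_div_assoc, mul_div_cancel_left₀ _ hqne]
  have hz2 : ξ^(a0 + (α*b^2 - β*b)) = ξ^(a0) * ξ^(α*b^2 - β*b) :=
    Stmt8.zsplit hne (by ring)
  rw [hz2]
  ring
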